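/- Let α > −1, and let Q be a polynomial of degree n with real coefficients whose zeros are real and simple, at least n−1 of them lying in (0,∞). Suppose x Q''(x) + (1+α−x) Q'(x) = −n P(x) where P is a polynomial of degree n all of whose zeros lie in (0,∞). Then all n−1 critical points of Q lie in (0,∞). -/

import Mathlib

open Polynomial

set_option maxHeartbeats 1000000

private lemma multiset_prod_pos_aux (s : Multiset ℝ) (h : ∀ x ∈ s, 0 < x) : 0 < s.prod := by
  induction s using Multiset.induction with
  | empty => simp
  | cons a t ih =>
    rw [Multiset.prod_cons]
    exact mul_pos (h a (Multiset.mem_cons_self a t))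
      (ih fun x hx => h x (Multiset.mem_cons_of_mem hx))

/-- let `α > −1` and `Q` a real polynomial of degree `n` with real simple
zeros, at least `n−1` of them in `(0,∞)`.  If `x Q'' + (1+α−x) Q' = −n P` with `P` of
degree `n` having all its zeros in `(0,∞)`, then all `n−1` critical points of `Q` lie
in `(0,∞)`. -/
theorem critical_points_positive (α : ℝ) (hα : -1 < α) (n : ℕ) (hn : 1 ≤ n)
    (Q P : Polynomial ℝ) (hQdeg : Q.natDegree = n)
    (hQroots : Q.roots.card = n) (hQsimple : Q.roots.Nodup)
    (hQpos : n - 1 ≤ (Q.roots.toFinset.filter (fun x => 0 < x)).card)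
    (hPdeg : P.natDegree = n) (hProots : P.roots.card = n)
    (hPpos : ∀ x ∈ P.roots, 0 < x)
    (hode : X * derivative (derivative Q) + (C (1 + α) - X) * derivative Q
        = (-(n : ℝ)) • P) :
    (derivative Q).roots.card = n - 1 ∧ ∀ x ∈ (derivative Q).roots, 0 < x := by
  have hQne : Q ≠ 0 := by
    intro h; rw [h, natDegree_zero] at hQdeg; omega
  have hlcQ : Q.leadingCoeff ≠ 0 := leadingCoeff_ne_zero.2 hQne
  -- degree of Q'
  have hcoeffQ' : (derivative Q).coeff (n - 1) = Q.leadingCoeff * n := by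
    obtain ⟨m, rfl⟩ : ∃ m, n = m + 1 := ⟨n - 1, by omega⟩
    rw [show m + 1 - 1 = m from rfl, coeff_derivative]
    rw [← hQdeg, coeff_natDegree, hQdeg]
    push_cast; ring
  have hn0 : (n : ℝ) ≠ 0 := Nat.cast_ne_zero.2 (by omega)
  have hQ'ne : derivative Q ≠ 0 := by
    intro h
    rw [h, coeff_zero] at hcoeffQ'
    exact mul_ne_zero hlcQ hn0 hcoeffQ'.symm
  have hQ'deg : (derivative Q).natDegree = n - 1 := by
    refine le_antisymm ((natDegree_derivative_le Q).trans (by omega)) ?_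
    exact le_natDegree_of_ne_zero (by
      rw [hcoeffQ']
      exact mul_ne_zero hlcQ hn0)
  have hcard : (derivative Q).roots.card = n - 1 := by
    have h1 : (derivative Q).roots.card ≤ n - 1 := (card_roots' _).trans_eq hQ'deg
    have h2 := Q.card_roots_le_derivative
    rw [hQroots] at h2
    omega
  refine ⟨hcard, ?_⟩
  -- sorted list of roots of Q
  set L := Q.roots.sort (· ≤ ·) with hLdef
  have hLlen : L.length = n := by rw [hLdef, Multiset.length_sort, hQroots]
  have hLnodup : L.Nodup := by
    rw [← Multiset.coe_nodup, hLdef, Multiset.sort_eq]; exact hQsimple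
  have hLsort : L.Pairwise (· < ·) :=
    ((Multiset.pairwise_sort _ _).and hLnodup).imp (fun h => lt_of_le_of_ne h.1 h.2)
  have hmemL : ∀ x, x ∈ L ↔ x ∈ Q.roots := fun x => Multiset.mem_sort _
  have hgetroot : ∀ (k : ℕ) (hk : k < L.length), L.get ⟨k, hk⟩ ∈ Q.roots :=
    fun k hk => (hmemL _).1 (List.get_mem L ⟨k, hk⟩)
  have hgetlt : ∀ {i j : Fin L.length}, i < j → L.get i < L.get j :=
    fun h => hLsort.rel_get_of_lt h
  have hgetle : ∀ {i j : Fin L.length}, i ≤ j → L.get i ≤ L.get j := by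
    intro i j hij
    rcases eq_or_lt_of_le hij with h | h
    · rw [h]
    · exact (hgetlt h).le
  -- Rolle roots
  have key : ∀ i : Fin (n - 1), ∃ c : ℝ,
      L.get ⟨i.1, by have := i.isLt; omega⟩ < c ∧
      c < L.get ⟨i.1 + 1, by have := i.isLt; omega⟩ ∧ eval c (derivative Q) = 0 := by
    intro i
    have hi1 : i.1 < L.length := by have := i.isLt; omega
    have hi2 : i.1 + 1 < L.length := by have := i.isLt; omega
    have hab : L.get ⟨i.1, hi1⟩ < L.get ⟨i.1 + 1, hi2⟩ :=
      hgetlt (by simp [Fin.lt_def])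
    have ha : eval (L.get ⟨i.1, hi1⟩) Q = 0 := isRoot_of_mem_roots (hgetroot _ _)
    have hb : eval (L.get ⟨i.1 + 1, hi2⟩) Q = 0 := isRoot_of_mem_roots (hgetroot _ _)
    obtain ⟨c, hc1, hc2⟩ := exists_deriv_eq_zero hab Q.continuousOn (by rw [ha, hb])
    exact ⟨c, hc1.1, hc1.2, by rwa [Polynomial.deriv] at hc2⟩
  choose g hg1 hg2 hg3 using key
  have hgmono : StrictMono g := by
    intro i j hij
    have h2 : L.get ⟨i.1 + 1, by have := i.isLt; omega⟩ ≤ L.get ⟨j.1, by have := j.isLt; omega⟩ :=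
      hgetle (by simp [Fin.le_def]; omega)
    exact (hg2 i).trans_le (h2.trans (hg1 j).le)
  -- the multiset of Rolle roots equals roots of Q'
  have hroots_eq : (derivative Q).roots = (Finset.univ : Finset (Fin (n - 1))).val.map g := by
    refine (Multiset.eq_of_le_of_card_le ?_ ?_).symm
    · refine (Multiset.le_iff_subset (Multiset.Nodup.map hgmono.injective Finset.univ.nodup)).2 ?_
      intro x hx
      obtain ⟨i, _, rfl⟩ := Multiset.mem_map.1 hx
      rw [mem_roots hQ'ne]
      exact hg3 i
    · rw [hcard, Multiset.card_map]
      simp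
  intro x hx
  rw [hroots_eq] at hx
  obtain ⟨i, _, rfl⟩ := Multiset.mem_map.1 hx
  have hn2 : 2 ≤ n := by have := i.isLt; omega
  have h0len : 0 < L.length := by omega
  have h1len : 1 < L.length := by omega
  by_cases hfirst : 0 < L.get ⟨0, h0len⟩
  · refine lt_of_lt_of_le hfirst ((hgetle ?_).trans (hg1 i).le)
    simp [Fin.le_def]
  push_neg at hfirst
  -- second smallest root of Q is positive
  have hb_pos : 0 < L.get ⟨1, h1len⟩ := by
    by_contra hb
    push_neg at hb
    have ha0mem : L.get ⟨0, h0len⟩ ∈ Q.roots.toFinset :=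
      Multiset.mem_toFinset.2 (hgetroot _ _)
    have hbmem : L.get ⟨1, h1len⟩ ∈ Q.roots.toFinset :=
      Multiset.mem_toFinset.2 (hgetroot _ _)
    have hne : L.get ⟨0, h0len⟩ ≠ L.get ⟨1, h1len⟩ :=
      (hgetlt (by simp [Fin.lt_def])).ne
    have hsub : Q.roots.toFinset.filter (fun x => 0 < x) ⊆
        (Q.roots.toFinset.erase (L.get ⟨0, h0len⟩)).erase (L.get ⟨1, h1len⟩) := by
      intro y hy
      rw [Finset.mem_filter] at hy
      refine Finset.mem_erase.2 ⟨?_, Finset.mem_erase.2 ⟨?_, hy.1⟩⟩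
      · intro h; rw [h] at hy; exact absurd hy.2 (not_lt.2 hb)
      · intro h; rw [h] at hy; exact absurd hy.2 (not_lt.2 hfirst)
    have hcardsub := Finset.card_le_card hsub
    rw [Finset.card_erase_of_mem (Finset.mem_erase.2 ⟨hne.symm, hbmem⟩),
      Finset.card_erase_of_mem ha0mem,
      Multiset.toFinset_card_of_nodup hQsimple, hQroots] at hcardsub
    omega
  rcases Nat.eq_zero_or_pos i.1 with hi0 | hi1
  swap
  · -- i ≥ 1 : g i > L.get 1 > 0
    refine hb_pos.trans (lt_of_le_of_lt (hgetle ?_) (hg1 i))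
    simp [Fin.le_def]; omega
  -- i = 0, the hard case
  by_contra hg0
  push_neg at hg0
  exfalso
  set a0 := L.get ⟨0, h0len⟩ with ha0def
  set b := L.get ⟨1, h1len⟩ with hbdef
  -- leading coefficients agree
  obtain ⟨m, rfl⟩ : ∃ m, n = m + 2 := ⟨n - 2, by omega⟩
  have hlcP : P.leadingCoeff = Q.leadingCoeff := by
    have h := congrArg (fun p => coeff p (m + 2)) hode
    simp only [coeff_add, coeff_smul, smul_eq_mul] at h
    rw [coeff_X_mul, sub_mul, coeff_sub, coeff_X_mul, coeff_C_mul] at h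
    have hdd : (derivative (derivative Q)).coeff (m + 1) = 0 := by
      refine coeff_eq_zero_of_natDegree_lt ?_
      have := natDegree_derivative_le (derivative Q)
      rw [hQ'deg] at this
      omega
    have hd2 : (derivative Q).coeff (m + 2) = 0 := by
      refine coeff_eq_zero_of_natDegree_lt ?_
      rw [hQ'deg]; omega
    have hd1 : (derivative Q).coeff (m + 1) = Q.leadingCoeff * ((m : ℝ) + 2) := by
      rw [show m + 1 = m + 2 - 1 from rfl, hcoeffQ']
      push_cast; ring
    have hPl : P.coeff (m + 2) = P.leadingCoeff := by rw [← hPdeg, coeff_natDegree]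
    rw [hdd, hd2, hd1, hPl] at h
    push_cast at h
    have h2 : (-((m : ℝ) + 2)) * P.leadingCoeff = (-((m : ℝ) + 2)) * Q.leadingCoeff := by
      linarith
    exact mul_left_cancel₀ (neg_ne_zero.2 (by positivity)) h2
  -- value of P at 0
  have hP0 : eval 0 P = P.leadingCoeff * ((-1) ^ (m + 2) * P.roots.prod) := by
    conv_lhs => rw [← C_leadingCoeff_mul_prod_multiset_X_sub_C (p := P)
      (by rw [hProots, hPdeg])]
    rw [eval_mul, eval_C, eval_multiset_prod, Multiset.map_map]
    have heq : ((fun x : ℝ[X] => eval 0 x) ∘ fun a : ℝ => X - C a) = Neg.neg := by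
      funext a; simp
    rw [heq, Multiset.prod_map_neg, hProots]
  have hprodP : 0 < P.roots.prod := multiset_prod_pos_aux _ hPpos
  have h0 : (1 + α) * eval 0 (derivative Q) = -((m : ℝ) + 2) * eval 0 P := by
    have h := congrArg (eval 0) hode
    simp only [eval_add, eval_mul, eval_smul, eval_X, eval_sub, eval_C, smul_eq_mul] at h
    push_cast at h
    linarith [h]
  -- value of Q' at b
  have hbmemroots : b ∈ Q.roots := hgetroot _ _
  have ha0memroots : a0 ∈ Q.roots := hgetroot _ _
  have hab_ne : a0 ≠ b := (hgetlt (show (⟨0, h0len⟩ : Fin L.length) < ⟨1, h1len⟩ by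
    simp [Fin.lt_def])).ne
  have ha0mem' : a0 ∈ Q.roots.erase b := (Multiset.mem_erase_of_ne hab_ne).2 ha0memroots
  have hQ'b : eval b (derivative Q) =
      Q.leadingCoeff * (Multiset.map (fun a => b - a) (Q.roots.erase b)).prod := by
    conv_lhs => rw [← C_leadingCoeff_mul_prod_multiset_X_sub_C (p := Q)
      (by rw [hQroots, hQdeg])]
    rw [derivative_mul, derivative_C, zero_mul, zero_add, eval_mul, eval_C,
      eval_multiset_prod_X_sub_C_derivative hbmemroots]
  -- rest2 : roots other than a0 and b, all greater than b
  set rest2 := (Q.roots.erase b).erase a0 with hrest2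
  have herase_eq : Q.roots.erase b = a0 ::ₘ rest2 := (Multiset.cons_erase ha0mem').symm
  have hrest2card : Multiset.card rest2 = m := by
    rw [hrest2, Multiset.card_erase_of_mem ha0mem', Multiset.card_erase_of_mem hbmemroots,
      hQroots]
    rfl
  have hrest2gt : ∀ q ∈ rest2, b < q := by
    intro q hq
    have hqe : q ∈ Q.roots.erase b := Multiset.mem_of_mem_erase hq
    have hqroots : q ∈ Q.roots := Multiset.mem_of_mem_erase hqe
    have hqa0 : q ≠ a0 := by
      intro h; rw [h] at hq
      exact (hQsimple.erase b).notMem_erase hq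
    have hqb : q ≠ b := by
      intro h; rw [h] at hqe
      exact hQsimple.notMem_erase hqe
    obtain ⟨k, hk⟩ := List.mem_iff_get.1 ((hmemL q).2 hqroots)
    have hk0 : k.1 ≠ 0 := by
      intro h
      apply hqa0
      rw [← hk, ha0def]
      congr 1
      exact Fin.ext h
    have hk1' : k.1 ≠ 1 := by
      intro h
      apply hqb
      rw [← hk, hbdef]
      congr 1
      exact Fin.ext h
    calc b < L.get k := hgetlt (by simp [Fin.lt_def]; omega)
    _ = q := hk
  -- sign computation
  have hval2 : (Multiset.map (fun a => b - a) (Q.roots.erase b)).prod =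
      (b - a0) * ((-1) ^ m * (Multiset.map (fun a => a - b) rest2).prod) := by
    rw [herase_eq, Multiset.map_cons, Multiset.prod_cons]
    congr 1
    have heq2 : (Multiset.map (fun a => b - a) rest2) =
        (Multiset.map (fun a => a - b) rest2).map Neg.neg := by
      rw [Multiset.map_map]; congr 1; funext a; simp
    rw [heq2, Multiset.prod_map_neg, Multiset.card_map, hrest2card]
  have hprod2 : 0 < (Multiset.map (fun a => a - b) rest2).prod := by
    refine multiset_prod_pos_aux _ ?_
    intro x hx
    obtain ⟨q, hq, rfl⟩ := Multiset.mem_map.1 hx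
    exact sub_pos.2 (hrest2gt q hq)
  have hba0 : 0 < b - a0 := by
    have h := hgetlt (show (⟨0, h0len⟩ : Fin L.length) < ⟨1, h1len⟩ by simp [Fin.lt_def])
    rw [← ha0def, ← hbdef] at h
    linarith
  have hαpos : 0 < 1 + α := by linarith
  have hsgn1 : (-1 : ℝ) ^ (m + 2) * (-1) ^ m = 1 := by
    rw [← pow_add, show m + 2 + m = 2 * (m + 1) by omega, pow_mul, neg_one_sq, one_pow]
  have hlc2 : 0 < Q.leadingCoeff ^ 2 := by positivity
  have hAB : (1 + α) * (eval 0 (derivative Q) * eval b (derivative Q)) =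
      -((m : ℝ) + 2) * (Q.leadingCoeff ^ 2 * (((-1 : ℝ) ^ (m + 2) * (-1) ^ m) *
        (P.roots.prod * ((b - a0) * (Multiset.map (fun a => a - b) rest2).prod)))) := by
    calc (1 + α) * (eval 0 (derivative Q) * eval b (derivative Q))
        = ((1 + α) * eval 0 (derivative Q)) * eval b (derivative Q) := by ring
    _ = _ := by rw [h0, hP0, hlcP, hQ'b, hval2]; ring
  rw [hsgn1] at hAB
  have hoppsign : eval 0 (derivative Q) * eval b (derivative Q) < 0 := by
    have hpos : 0 < Q.leadingCoeff ^ 2 * ((1:ℝ) *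
        (P.roots.prod * ((b - a0) * (Multiset.map (fun a => a - b) rest2).prod))) :=
      mul_pos hlc2 (by rw [one_mul]; exact mul_pos hprodP (mul_pos hba0 hprod2))
    have hm2 : (0:ℝ) < (m : ℝ) + 2 := by positivity
    nlinarith [hpos, hαpos, hAB]
  -- g i must be < 0
  have hAne : eval 0 (derivative Q) ≠ 0 := by
    intro h; rw [h, zero_mul] at hoppsign; exact lt_irrefl 0 hoppsign
  have hg0lt : g i < 0 := by
    rcases lt_or_eq_of_le hg0 with h | h
    · exact h
    · exact absurd (h ▸ hg3 i) hAne
  -- IVT gives a root of Q' in (0, b), contradiction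
  have hcont : ContinuousOn (fun x => eval x (derivative Q)) (Set.Icc 0 b) :=
    (derivative Q).continuousOn
  have hivt : ∃ z ∈ Set.Ioo (0 : ℝ) b, eval z (derivative Q) = 0 := by
    rcases mul_neg_iff.1 hoppsign with ⟨hA, hB⟩ | ⟨hA, hB⟩
    · obtain ⟨z, hz, hz2⟩ := intermediate_value_Ioo' hb_pos.le hcont
        (Set.mem_Ioo.2 ⟨hB, hA⟩)
      exact ⟨z, hz, hz2⟩
    · obtain ⟨z, hz, hz2⟩ := intermediate_value_Ioo hb_pos.le hcont
        (Set.mem_Ioo.2 ⟨hA, hB⟩)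
      exact ⟨z, hz, hz2⟩
  obtain ⟨z, hz, hz0⟩ := hivt
  have hzroot : z ∈ (derivative Q).roots := (mem_roots hQ'ne).2 hz0
  rw [hroots_eq] at hzroot
  obtain ⟨j, _, hj⟩ := Multiset.mem_map.1 hzroot
  rcases Nat.eq_zero_or_pos j.1 with hj0 | hj1
  · have hji : j = i := Fin.ext (by omega)
    rw [hji] at hj
    rw [hj] at hg0lt
    exact absurd hz.1 (not_lt.2 hg0lt.le)
  · have hle : b ≤ L.get ⟨j.1, by have := j.isLt; omega⟩ := by
      rw [hbdef]
      exact hgetle (by simp [Fin.le_def]; omega)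
    have hlt : b < g j := hle.trans_lt (hg1 j)
    rw [hj] at hlt
    exact absurd hz.2 (not_lt.2 hlt.le)
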